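/- Let θ ∈ (0,1), η₁ > 0, η_t = η₁ t^{−θ}, and T ≥ 2 an integer. Then ∑_{k=1}^{T−1} (1/(k+1)) [2η_{T−k} − (1/k) ∑_{t=T−k+1}^{T} 2η_t] ≤ (6η₁/(1−θ)) T^{−θ}, and each summand is nonnegative. -/

import Mathlib

open Finset

lemma gauss_icc (k : ℕ) : ∑ j ∈ Finset.Icc 1 k, (j:ℝ) = k*(k+1)/2 := by
  induction k with
  | zero => simp
  | succ n ih =>
    rw [Finset.sum_Icc_succ_top (by omega), ih]
    push_cast; ring

lemma tele (h : ℕ → ℝ) (a : ℕ) : ∀ N, a ≤ N + 1 →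
    ∑ k ∈ Finset.Icc a N, (h k - h (k+1)) = h a - h (N+1) := by
  intro N
  induction N with
  | zero =>
    intro ha
    interval_cases a
    · simp
    · simp
  | succ n ih =>
    intro ha
    rcases Nat.lt_or_ge a (n+2) with h1 | h1
    · have ha' : a ≤ n + 1 := by omega
      rw [Finset.sum_Icc_succ_top ha', ih ha']
      ring
    · have : a = n + 2 := by omega
      subst this
      rw [Finset.Icc_eq_empty (by omega)]
      simp

lemma bern_up {p a b : ℝ} (hp0 : 0 ≤ p) (hp1 : p ≤ 1) (ha : 0 < a) (hab : a ≤ b) :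
    b ^ p ≤ a ^ p + p * a ^ (p-1) * (b - a) := by
  set s : ℝ := (b - a) / a with hs
  have hs0 : 0 ≤ s := div_nonneg (by linarith) ha.le
  have hb : b = a * (1 + s) := by have := ha.ne'; rw [hs]; field_simp; ring
  have h1 : (1 + s) ^ p ≤ 1 + p * s :=
    rpow_one_add_le_one_add_mul_self (by linarith) hp0 hp1
  have hap : (0:ℝ) < a ^ p := Real.rpow_pos_of_pos ha p
  calc b ^ p = a ^ p * (1 + s) ^ p := by
        rw [hb, Real.mul_rpow ha.le (by linarith)]
    _ ≤ a ^ p * (1 + p * s) := by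
        exact mul_le_mul_of_nonneg_left h1 hap.le
    _ = a ^ p + p * a ^ (p-1) * (b - a) := by
        rw [Real.rpow_sub ha, Real.rpow_one, hs]
        field_simp

lemma bern_low {p a b : ℝ} (hp0 : 0 ≤ p) (hp1 : p ≤ 1) (ha : 0 ≤ a) (hb : 0 < b) (hab : a ≤ b) :
    p * b ^ (p-1) * (b - a) ≤ b ^ p - a ^ p := by
  set s : ℝ := (a - b) / b with hs
  have hs1 : -1 ≤ s := by
    rw [hs]; rw [neg_le, ← neg_div]
    rw [div_le_one hb]; linarith
  have hs0 : s ≤ 0 := by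
    apply div_nonpos_of_nonpos_of_nonneg <;> linarith
  have hA : a = b * (1 + s) := by have := hb.ne'; rw [hs]; field_simp; ring
  have h1 : (1 + s) ^ p ≤ 1 + p * s :=
    rpow_one_add_le_one_add_mul_self hs1 hp0 hp1
  have hbp : (0:ℝ) < b ^ p := Real.rpow_pos_of_pos hb p
  have key : a ^ p ≤ b ^ p + p * b ^ (p-1) * (a - b) := by
    calc a ^ p = b ^ p * (1 + s) ^ p := by
          rw [hA, Real.mul_rpow hb.le (by linarith)]
      _ ≤ b ^ p * (1 + p * s) := mul_le_mul_of_nonneg_left h1 hbp.le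
      _ = b ^ p + p * b ^ (p-1) * (a - b) := by
          rw [Real.rpow_sub hb, Real.rpow_one, hs]
          field_simp
  linarith

lemma neg_up {θ a b : ℝ} (hθ0 : 0 < θ) (hθ1 : θ ≤ 1) (ha : 0 < a) (hab : a ≤ b) :
    a ^ (-θ) - b ^ (-θ) ≤ θ * a ^ (-1-θ) * (b - a) := by
  have hb : 0 < b := lt_of_lt_of_le ha hab
  have key : b ^ θ - a ^ θ ≤ θ * a ^ (θ-1) * (b - a) := by
    have := bern_up hθ0.le hθ1 ha hab
    linarith
  have hxa : (0:ℝ) < a ^ θ := Real.rpow_pos_of_pos ha θ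
  have hxb : (0:ℝ) < b ^ θ := Real.rpow_pos_of_pos hb θ
  have hmono : b ^ (-θ) ≤ a ^ (-θ) :=
    Real.rpow_le_rpow_of_nonpos ha hab (by linarith)
  have e1 : a ^ (-θ) - b ^ (-θ) = (b ^ θ - a ^ θ) * (a ^ θ)⁻¹ * (b ^ θ)⁻¹ := by
    rw [Real.rpow_neg ha.le, Real.rpow_neg hb.le]
    field_simp
  have e2 : θ * a ^ (θ-1) * (b-a) * (a ^ θ)⁻¹ * (b ^ θ)⁻¹
      = θ * (b - a) * a ^ (-1:ℝ) * b ^ (-θ) := by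
    rw [← Real.rpow_neg ha.le, ← Real.rpow_neg hb.le]
    have h : a ^ (θ-1) * a ^ (-θ) = a ^ (-1:ℝ) := by
      rw [← Real.rpow_add ha]; congr 1; try ring
    rw [← h]; ring
  have e3 : θ * (b - a) * a ^ (-1:ℝ) * b ^ (-θ) ≤ θ * (b - a) * a ^ (-1:ℝ) * a ^ (-θ) := by
    have h0 : 0 ≤ θ * (b - a) * a ^ (-1:ℝ) := by
      have := Real.rpow_pos_of_pos ha (-1:ℝ)
      have hba : 0 ≤ b - a := by linarith
      positivity
    exact mul_le_mul_of_nonneg_left hmono h0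
  have e4 : θ * (b - a) * a ^ (-1:ℝ) * a ^ (-θ) = θ * a ^ (-1-θ) * (b - a) := by
    have h : a ^ (-1:ℝ) * a ^ (-θ) = a ^ (-1-θ) := by
      rw [← Real.rpow_add ha]; congr 1; try ring
    rw [← h]; ring
  calc a ^ (-θ) - b ^ (-θ) = (b ^ θ - a ^ θ) * (a ^ θ)⁻¹ * (b ^ θ)⁻¹ := e1
    _ ≤ θ * a ^ (θ-1) * (b-a) * (a ^ θ)⁻¹ * (b ^ θ)⁻¹ := by
        have h1 : (0:ℝ) ≤ (a ^ θ)⁻¹ := by positivity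
        have h2 : (0:ℝ) ≤ (b ^ θ)⁻¹ := by positivity
        gcongr
    _ = θ * (b - a) * a ^ (-1:ℝ) * b ^ (-θ) := e2
    _ ≤ θ * (b - a) * a ^ (-1:ℝ) * a ^ (-θ) := e3
    _ = θ * a ^ (-1-θ) * (b - a) := e4

lemma neg_low {θ a b : ℝ} (hθ0 : 0 < θ) (hθ1 : θ ≤ 1) (ha : 0 < a) (hab : a ≤ b) :
    θ * b ^ (-1-θ) * (b - a) ≤ a ^ (-θ) - b ^ (-θ) := by
  have hb : 0 < b := lt_of_lt_of_le ha hab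
  have key : θ * b ^ (θ-1) * (b - a) ≤ b ^ θ - a ^ θ :=
    bern_low hθ0.le hθ1 ha.le hb hab
  have hxa : (0:ℝ) < a ^ θ := Real.rpow_pos_of_pos ha θ
  have hxb : (0:ℝ) < b ^ θ := Real.rpow_pos_of_pos hb θ
  have hmono : b ^ (-θ) ≤ a ^ (-θ) :=
    Real.rpow_le_rpow_of_nonpos ha hab (by linarith)
  have e1 : a ^ (-θ) - b ^ (-θ) = (b ^ θ - a ^ θ) * (a ^ θ)⁻¹ * (b ^ θ)⁻¹ := by
    rw [Real.rpow_neg ha.le, Real.rpow_neg hb.le]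
    field_simp
  have e2 : θ * b ^ (θ-1) * (b-a) * (a ^ θ)⁻¹ * (b ^ θ)⁻¹
      = θ * (b - a) * b ^ (-1:ℝ) * a ^ (-θ) := by
    rw [← Real.rpow_neg ha.le, ← Real.rpow_neg hb.le]
    have h : b ^ (θ-1) * b ^ (-θ) = b ^ (-1:ℝ) := by
      rw [← Real.rpow_add hb]; congr 1; try ring
    rw [← h]; ring
  have e3 : θ * (b - a) * b ^ (-1:ℝ) * b ^ (-θ) ≤ θ * (b - a) * b ^ (-1:ℝ) * a ^ (-θ) := by
    have h0 : 0 ≤ θ * (b - a) * b ^ (-1:ℝ) := by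
      have := Real.rpow_pos_of_pos hb (-1:ℝ)
      have hba : 0 ≤ b - a := by linarith
      positivity
    exact mul_le_mul_of_nonneg_left hmono h0
  have e4 : θ * (b - a) * b ^ (-1:ℝ) * b ^ (-θ) = θ * b ^ (-1-θ) * (b - a) := by
    have h : b ^ (-1:ℝ) * b ^ (-θ) = b ^ (-1-θ) := by
      rw [← Real.rpow_add hb]; congr 1; try ring
    rw [← h]; ring
  calc θ * b ^ (-1-θ) * (b - a) = θ * (b - a) * b ^ (-1:ℝ) * b ^ (-θ) := e4.symm
    _ ≤ θ * (b - a) * b ^ (-1:ℝ) * a ^ (-θ) := e3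
    _ = θ * b ^ (θ-1) * (b-a) * (a ^ θ)⁻¹ * (b ^ θ)⁻¹ := e2.symm
    _ ≤ (b ^ θ - a ^ θ) * (a ^ θ)⁻¹ * (b ^ θ)⁻¹ := by
        have h1 : (0:ℝ) ≤ (a ^ θ)⁻¹ := by positivity
        have h2 : (0:ℝ) ≤ (b ^ θ)⁻¹ := by positivity
        gcongr
    _ = a ^ (-θ) - b ^ (-θ) := e1.symm

lemma tele_inc (h : ℕ → ℝ) (a : ℕ) : ∀ N, a ≤ N + 1 →
    ∑ k ∈ Finset.Icc a N, (h (k+1) - h k) = h (N+1) - h a := by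
  intro N hN
  have := tele (fun k => -h k) a N hN
  have e : ∑ k ∈ Finset.Icc a N, (-h k - -h (k+1)) = ∑ k ∈ Finset.Icc a N, (h (k+1) - h k) :=
    Finset.sum_congr rfl (fun k _ => by ring)
  rw [e] at this
  linarith

set_option maxHeartbeats 1000000 in
theorem stepsize_difference_sum_bound (θ η₁ : ℝ) (hθ0 : 0 < θ) (hθ1 : θ < 1) (hη₁ : 0 < η₁)
    (η : ℕ → ℝ) (hη : ∀ t : ℕ, η t = η₁ * (t : ℝ) ^ (-θ))
    (T : ℕ) (hT : 2 ≤ T) :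
    (∑ k ∈ Finset.Icc 1 (T - 1),
        (1 / ((k : ℝ) + 1)) * (2 * η (T - k) - (1 / (k : ℝ)) * ∑ t ∈ Finset.Icc (T - k + 1) T, 2 * η t)
      ≤ (6 * η₁ / (1 - θ)) * (T : ℝ) ^ (-θ)) ∧
    ∀ k ∈ Finset.Icc 1 (T - 1),
      0 ≤ (1 / ((k : ℝ) + 1)) * (2 * η (T - k) - (1 / (k : ℝ)) * ∑ t ∈ Finset.Icc (T - k + 1) T, 2 * η t) := by
  have hT2 : (2:ℝ) ≤ (T:ℝ) := by exact_mod_cast hT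
  have hT0 : (0:ℝ) < (T:ℝ) := by linarith
  have h1θ : (0:ℝ) < 1 - θ := by linarith
  have hcoef : η₁*(1+θ) + 2*η₁/(1-θ) ≤ 3*η₁/(1-θ) := by
    have hc1 : η₁*(1+θ) ≤ η₁/(1-θ) := by
      rw [le_div_iff₀ h1θ]
      nlinarith [mul_nonneg (mul_nonneg hη₁.le hθ0.le) hθ0.le]
    have hc2 : η₁/(1-θ) + 2*η₁/(1-θ) = 3*η₁/(1-θ) := by ring
    linarith
  have cardIcc : ∀ k : ℕ, k ≤ T → (Finset.Icc (T-k+1) T).card = k := by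
    intro k hk; rw [Nat.card_Icc]; omega
  -- nonnegativity of each summand
  have hpos : ∀ k ∈ Finset.Icc 1 (T - 1),
      0 ≤ (1 / ((k : ℝ) + 1)) * (2 * η (T - k) - (1 / (k : ℝ)) * ∑ t ∈ Finset.Icc (T - k + 1) T, 2 * η t) := by
    intro k hk
    obtain ⟨hk1, hk2⟩ := Finset.mem_Icc.mp hk
    have hk0 : (0:ℝ) < (k:ℝ) := by exact_mod_cast hk1
    have hTk0 : (0:ℝ) < ((T-k:ℕ):ℝ) := by
      have : 1 ≤ T - k := by omega
      exact_mod_cast this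
    apply mul_nonneg (by positivity)
    have hsum : ∑ t ∈ Finset.Icc (T-k+1) T, 2 * η t ≤ (k:ℝ) * (2 * η (T-k)) := by
      calc ∑ t ∈ Finset.Icc (T-k+1) T, 2 * η t
          ≤ ∑ t ∈ Finset.Icc (T-k+1) T, 2 * η (T-k) := by
            apply Finset.sum_le_sum
            intro t ht
            obtain ⟨ht1, ht2⟩ := Finset.mem_Icc.mp ht
            rw [hη, hη]
            have hle : ((T-k:ℕ):ℝ) ≤ (t:ℝ) := by exact_mod_cast (by omega : T - k ≤ t)
            have := Real.rpow_le_rpow_of_nonpos hTk0 hle (by linarith : -θ ≤ 0)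
            nlinarith
        _ = (k:ℝ) * (2 * η (T-k)) := by
            rw [Finset.sum_const, cardIcc k (by omega), nsmul_eq_mul]
    have h2 : (1/(k:ℝ)) * ∑ t ∈ Finset.Icc (T-k+1) T, 2 * η t ≤ (1/(k:ℝ)) * ((k:ℝ) * (2 * η (T-k))) :=
      mul_le_mul_of_nonneg_left hsum (by positivity)
    have h3 : (1/(k:ℝ)) * ((k:ℝ) * (2 * η (T-k))) = 2 * η (T-k) := by
      field_simp
    linarith
  -- per-summand fine bound
  have hB : ∀ k ∈ Finset.Icc 1 (T - 1),
      (1 / ((k : ℝ) + 1)) * (2 * η (T - k) - (1 / (k : ℝ)) * ∑ t ∈ Finset.Icc (T - k + 1) T, 2 * η t)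
        ≤ η₁ * θ * ((T-k:ℕ):ℝ) ^ (-1-θ) := by
    intro k hk
    obtain ⟨hk1, hk2⟩ := Finset.mem_Icc.mp hk
    have hk0 : (0:ℝ) < (k:ℝ) := by exact_mod_cast hk1
    have hTk0 : (0:ℝ) < ((T-k:ℕ):ℝ) := by
      have : 1 ≤ T - k := by omega
      exact_mod_cast this
    have hD : 2 * η (T - k) - (1 / (k : ℝ)) * ∑ t ∈ Finset.Icc (T - k + 1) T, 2 * η t
        = (1 / (k:ℝ)) * ∑ t ∈ Finset.Icc (T - k + 1) T, (2 * η (T-k) - 2 * η t) := by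
      rw [Finset.sum_sub_distrib, Finset.sum_const, cardIcc k (by omega), nsmul_eq_mul]
      have hk0' : (k:ℝ) ≠ 0 := ne_of_gt hk0
      field_simp
    have hterm : ∀ t ∈ Finset.Icc (T-k+1) T,
        2 * η (T-k) - 2 * η t ≤ 2*η₁*θ*((T-k:ℕ):ℝ)^(-1-θ) * ((t:ℝ) - ((T-k:ℕ):ℝ)) := by
      intro t ht
      obtain ⟨ht1, ht2⟩ := Finset.mem_Icc.mp ht
      have hle : ((T-k:ℕ):ℝ) ≤ (t:ℝ) := by exact_mod_cast (by omega : T - k ≤ t)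
      have h := neg_up hθ0 hθ1.le hTk0 hle
      calc 2 * η (T-k) - 2 * η t
          = 2*η₁*(((T-k:ℕ):ℝ)^(-θ) - (t:ℝ)^(-θ)) := by rw [hη, hη]; ring
        _ ≤ 2*η₁*(θ * ((T-k:ℕ):ℝ)^(-1-θ) * ((t:ℝ) - ((T-k:ℕ):ℝ))) :=
            mul_le_mul_of_nonneg_left h (by positivity)
        _ = 2*η₁*θ*((T-k:ℕ):ℝ)^(-1-θ) * ((t:ℝ) - ((T-k:ℕ):ℝ)) := by ring
    have hgauss : ∑ t ∈ Finset.Icc (T-k+1) T, ((t:ℝ) - ((T-k:ℕ):ℝ)) = (k:ℝ)*((k:ℝ)+1)/2 := by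
      have hmap : Finset.Icc (T-k+1) T = Finset.map (addLeftEmbedding (T-k)) (Finset.Icc 1 k) := by
        rw [Finset.map_add_left_Icc]
        congr 1
        omega
      rw [hmap, Finset.sum_map]
      have : ∀ j ∈ Finset.Icc 1 k, (((addLeftEmbedding (T-k)) j : ℕ):ℝ) - ((T-k:ℕ):ℝ) = (j:ℝ) := by
        intro j hj
        simp [addLeftEmbedding_apply]
      rw [Finset.sum_congr rfl this, gauss_icc]
    have hsum2 : ∑ t ∈ Finset.Icc (T-k+1) T, (2 * η (T-k) - 2 * η t)
        ≤ 2*η₁*θ*((T-k:ℕ):ℝ)^(-1-θ) * ((k:ℝ)*((k:ℝ)+1)/2) := by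
      calc ∑ t ∈ Finset.Icc (T-k+1) T, (2 * η (T-k) - 2 * η t)
          ≤ ∑ t ∈ Finset.Icc (T-k+1) T, 2*η₁*θ*((T-k:ℕ):ℝ)^(-1-θ) * ((t:ℝ) - ((T-k:ℕ):ℝ)) :=
            Finset.sum_le_sum hterm
        _ = 2*η₁*θ*((T-k:ℕ):ℝ)^(-1-θ) * ((k:ℝ)*((k:ℝ)+1)/2) := by
            rw [← Finset.mul_sum, hgauss]
    calc (1 / ((k : ℝ) + 1)) * (2 * η (T - k) - (1 / (k : ℝ)) * ∑ t ∈ Finset.Icc (T - k + 1) T, 2 * η t)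
        = (1 / ((k : ℝ) + 1)) * ((1 / (k:ℝ)) * ∑ t ∈ Finset.Icc (T - k + 1) T, (2 * η (T-k) - 2 * η t)) := by
          rw [hD]
      _ ≤ (1 / ((k : ℝ) + 1)) * ((1 / (k:ℝ)) * (2*η₁*θ*((T-k:ℕ):ℝ)^(-1-θ) * ((k:ℝ)*((k:ℝ)+1)/2))) := by
          apply mul_le_mul_of_nonneg_left _ (by positivity)
          exact mul_le_mul_of_nonneg_left hsum2 (by positivity)
      _ = η₁ * θ * ((T-k:ℕ):ℝ) ^ (-1-θ) := by
          field_simp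
  -- per-summand crude bound
  have hC : ∀ k ∈ Finset.Icc 1 (T - 1),
      (1 / ((k : ℝ) + 1)) * (2 * η (T - k) - (1 / (k : ℝ)) * ∑ t ∈ Finset.Icc (T - k + 1) T, 2 * η t)
        ≤ 2 * η₁ * ((T-k:ℕ):ℝ) ^ (-θ) / ((k:ℝ)+1) := by
    intro k hk
    obtain ⟨hk1, hk2⟩ := Finset.mem_Icc.mp hk
    have hk0 : (0:ℝ) < (k:ℝ) := by exact_mod_cast hk1
    have hsumnn : 0 ≤ ∑ t ∈ Finset.Icc (T-k+1) T, 2 * η t := by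
      apply Finset.sum_nonneg
      intro t ht
      rw [hη]
      positivity
    have h1 : 2 * η (T - k) - (1 / (k : ℝ)) * ∑ t ∈ Finset.Icc (T - k + 1) T, 2 * η t ≤ 2 * η (T-k) := by
      have : 0 ≤ (1 / (k : ℝ)) * ∑ t ∈ Finset.Icc (T - k + 1) T, 2 * η t := by positivity
      linarith
    calc (1 / ((k : ℝ) + 1)) * (2 * η (T - k) - (1 / (k : ℝ)) * ∑ t ∈ Finset.Icc (T - k + 1) T, 2 * η t)
        ≤ (1 / ((k : ℝ) + 1)) * (2 * η (T-k)) := mul_le_mul_of_nonneg_left h1 (by positivity)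
      _ = 2 * η₁ * ((T-k:ℕ):ℝ) ^ (-θ) / ((k:ℝ)+1) := by
          rw [hη]
          ring
  refine ⟨?_, hpos⟩
  -- main sum bound
  set K : ℕ := T / 2 with hKdef
  have hK1 : 1 ≤ K := by omega
  have hK2 : K ≤ T - 1 := by omega
  have h2K : T ≤ 2*K + 1 := by omega
  set M : ℕ := T - K with hMdef
  have hM1 : 1 ≤ M := by omega
  have hM1' : (1:ℝ) ≤ (M:ℝ) := by exact_mod_cast hM1
  have hMreal : (T:ℝ)/2 ≤ (M:ℝ) := by
    have h : T ≤ 2*M := by omega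
    have : (T:ℝ) ≤ 2*(M:ℝ) := by exact_mod_cast h
    linarith
  have hM0 : (0:ℝ) < (M:ℝ) := by linarith
  have hsplit : ∑ k ∈ Finset.Icc 1 (T-1),
      (1 / ((k : ℝ) + 1)) * (2 * η (T - k) - (1 / (k : ℝ)) * ∑ t ∈ Finset.Icc (T - k + 1) T, 2 * η t)
      = (∑ k ∈ Finset.Icc 1 K,
      (1 / ((k : ℝ) + 1)) * (2 * η (T - k) - (1 / (k : ℝ)) * ∑ t ∈ Finset.Icc (T - k + 1) T, 2 * η t))
      + ∑ k ∈ Finset.Icc (K+1) (T-1),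
      (1 / ((k : ℝ) + 1)) * (2 * η (T - k) - (1 / (k : ℝ)) * ∑ t ∈ Finset.Icc (T - k + 1) T, 2 * η t) := by
    have e1 : ∀ n : ℕ, Finset.Icc 1 n = Finset.Ioc 0 n := by
      intro n; ext x; simp [Finset.mem_Icc, Finset.mem_Ioc]; omega
    have e2 : Finset.Icc (K+1) (T-1) = Finset.Ioc K (T-1) := by
      ext x; simp [Finset.mem_Icc, Finset.mem_Ioc]
    rw [e1, e1, e2]
    exact (Finset.sum_Ioc_consecutive _ (Nat.zero_le K) hK2).symm
  -- Part 1
  have hM1θ : (M:ℝ)^(-1-θ) ≤ (M:ℝ)^(-θ) :=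
    Real.rpow_le_rpow_of_exponent_le hM1' (by linarith)
  have hpart1 : ∑ k ∈ Finset.Icc 1 K,
      (1 / ((k : ℝ) + 1)) * (2 * η (T - k) - (1 / (k : ℝ)) * ∑ t ∈ Finset.Icc (T - k + 1) T, 2 * η t)
      ≤ η₁ * (1+θ) * (M:ℝ)^(-θ) := by
    have step1 : ∑ k ∈ Finset.Icc 1 K,
        (1 / ((k : ℝ) + 1)) * (2 * η (T - k) - (1 / (k : ℝ)) * ∑ t ∈ Finset.Icc (T - k + 1) T, 2 * η t)
        ≤ ∑ k ∈ Finset.Icc 1 K, η₁ * θ * ((T-k:ℕ):ℝ) ^ (-1-θ) := by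
      apply Finset.sum_le_sum
      intro k hk
      obtain ⟨h1, h2⟩ := Finset.mem_Icc.mp hk
      exact hB k (Finset.mem_Icc.mpr ⟨h1, by omega⟩)
    obtain ⟨K', hK'⟩ : ∃ K', K = K' + 1 := ⟨K-1, by omega⟩
    have hsplit2 : ∑ k ∈ Finset.Icc 1 K, η₁ * θ * ((T-k:ℕ):ℝ) ^ (-1-θ)
        = (∑ k ∈ Finset.Icc 1 K', η₁ * θ * ((T-k:ℕ):ℝ) ^ (-1-θ)) + η₁ * θ * ((T-(K'+1):ℕ):ℝ) ^ (-1-θ) := by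
      rw [hK', Finset.sum_Icc_succ_top (by omega)]
    have hterm2 : ∀ k ∈ Finset.Icc 1 K',
        η₁ * θ * ((T-k:ℕ):ℝ) ^ (-1-θ)
          ≤ η₁ * (((T-(k+1):ℕ):ℝ) ^ (-θ) - ((T-k:ℕ):ℝ) ^ (-θ)) := by
      intro k hk
      obtain ⟨h1, h2⟩ := Finset.mem_Icc.mp hk
      have ha : (0:ℝ) < ((T-(k+1):ℕ):ℝ) := by
        have : 1 ≤ T - (k+1) := by omega
        exact_mod_cast this
      have hab : ((T-(k+1):ℕ):ℝ) ≤ ((T-k:ℕ):ℝ) := by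
        exact_mod_cast (by omega : T - (k+1) ≤ T - k)
      have hba : ((T-k:ℕ):ℝ) - ((T-(k+1):ℕ):ℝ) = 1 := by
        have h3 : T - k = (T - (k+1)) + 1 := by omega
        rw [h3]
        push_cast
        ring
      have h := neg_low hθ0 hθ1.le ha hab
      rw [hba] at h
      calc η₁ * θ * ((T-k:ℕ):ℝ) ^ (-1-θ) = η₁ * (θ * ((T-k:ℕ):ℝ) ^ (-1-θ) * 1) := by ring
        _ ≤ η₁ * (((T-(k+1):ℕ):ℝ) ^ (-θ) - ((T-k:ℕ):ℝ) ^ (-θ)) :=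
            mul_le_mul_of_nonneg_left h hη₁.le
    have htele : ∑ k ∈ Finset.Icc 1 K', (η₁ * (((T-(k+1):ℕ):ℝ) ^ (-θ) - ((T-k:ℕ):ℝ) ^ (-θ)))
        = η₁ * (((T-(K'+1):ℕ):ℝ) ^ (-θ) - ((T-1:ℕ):ℝ) ^ (-θ)) := by
      rw [← Finset.mul_sum]
      congr 1
      exact tele_inc (fun k => ((T-k:ℕ):ℝ) ^ (-θ)) 1 K' (by omega)
    have hMK : (T-(K'+1):ℕ) = M := by omega
    have hT1nn : (0:ℝ) ≤ ((T-1:ℕ):ℝ) ^ (-θ) := Real.rpow_nonneg (Nat.cast_nonneg _) _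
    have hfin : ∑ k ∈ Finset.Icc 1 K', η₁ * θ * ((T-k:ℕ):ℝ) ^ (-1-θ) ≤ η₁ * (M:ℝ)^(-θ) := by
      calc ∑ k ∈ Finset.Icc 1 K', η₁ * θ * ((T-k:ℕ):ℝ) ^ (-1-θ)
          ≤ ∑ k ∈ Finset.Icc 1 K', (η₁ * (((T-(k+1):ℕ):ℝ) ^ (-θ) - ((T-k:ℕ):ℝ) ^ (-θ))) :=
            Finset.sum_le_sum hterm2
        _ = η₁ * (((T-(K'+1):ℕ):ℝ) ^ (-θ) - ((T-1:ℕ):ℝ) ^ (-θ)) := htele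
        _ = η₁ * ((M:ℝ) ^ (-θ) - ((T-1:ℕ):ℝ) ^ (-θ)) := by rw [hMK]
        _ ≤ η₁ * (M:ℝ)^(-θ) := by nlinarith [Real.rpow_nonneg (Nat.cast_nonneg M) (-θ)]
    have hlastle : η₁ * θ * ((T-(K'+1):ℕ):ℝ) ^ (-1-θ) ≤ η₁ * θ * (M:ℝ)^(-θ) := by
      rw [hMK]
      have h0 : (0:ℝ) ≤ η₁ * θ := by positivity
      exact mul_le_mul_of_nonneg_left hM1θ h0
    calc ∑ k ∈ Finset.Icc 1 K,
        (1 / ((k : ℝ) + 1)) * (2 * η (T - k) - (1 / (k : ℝ)) * ∑ t ∈ Finset.Icc (T - k + 1) T, 2 * η t)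
        ≤ ∑ k ∈ Finset.Icc 1 K, η₁ * θ * ((T-k:ℕ):ℝ) ^ (-1-θ) := step1
      _ = (∑ k ∈ Finset.Icc 1 K', η₁ * θ * ((T-k:ℕ):ℝ) ^ (-1-θ)) + η₁ * θ * ((T-(K'+1):ℕ):ℝ) ^ (-1-θ) := hsplit2
      _ ≤ η₁ * (M:ℝ)^(-θ) + η₁ * θ * (M:ℝ)^(-θ) := add_le_add hfin hlastle
      _ = η₁ * (1+θ) * (M:ℝ)^(-θ) := by ring
  -- Part 2
  have hpart2 : ∑ k ∈ Finset.Icc (K+1) (T-1),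
      (1 / ((k : ℝ) + 1)) * (2 * η (T - k) - (1 / (k : ℝ)) * ∑ t ∈ Finset.Icc (T - k + 1) T, 2 * η t)
      ≤ (4*η₁/((T:ℝ)*(1-θ))) * ((T-(K+1):ℕ):ℝ)^(1-θ) := by
    have step1 : ∀ k ∈ Finset.Icc (K+1) (T-1),
        (1 / ((k : ℝ) + 1)) * (2 * η (T - k) - (1 / (k : ℝ)) * ∑ t ∈ Finset.Icc (T - k + 1) T, 2 * η t)
        ≤ (4*η₁/((T:ℝ)*(1-θ))) * ((((T-k:ℕ):ℝ))^(1-θ) - (((T-(k+1):ℕ):ℝ))^(1-θ)) := by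
      intro k hk
      obtain ⟨h1, h2⟩ := Finset.mem_Icc.mp hk
      have hb : (0:ℝ) < ((T-k:ℕ):ℝ) := by
        have : 1 ≤ T - k := by omega
        exact_mod_cast this
      have ha : (0:ℝ) ≤ ((T-(k+1):ℕ):ℝ) := Nat.cast_nonneg _
      have hab : ((T-(k+1):ℕ):ℝ) ≤ ((T-k:ℕ):ℝ) := by
        exact_mod_cast (by omega : T - (k+1) ≤ T - k)
      have hba : ((T-k:ℕ):ℝ) - ((T-(k+1):ℕ):ℝ) = 1 := by
        have h3 : T - k = (T - (k+1)) + 1 := by omega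
        rw [h3]
        push_cast
        ring
      have hbl := bern_low (p := 1-θ) (by linarith) (by linarith) ha hb hab
      rw [hba] at hbl
      have hexp : (1-θ)-1 = -θ := by ring
      rw [hexp] at hbl
      -- hbl : (1-θ) * ((T-k:ℕ):ℝ)^(-θ) * 1 ≤ ((T-k:ℕ):ℝ)^(1-θ) - ((T-(k+1):ℕ):ℝ)^(1-θ)
      have hCk := hC k (Finset.mem_Icc.mpr ⟨by omega, h2⟩)
      have hP : (0:ℝ) < ((T-k:ℕ):ℝ)^(-θ) := Real.rpow_pos_of_pos hb _
      have hTk : (T:ℝ) ≤ 2*((k:ℝ)+1) := by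
        have h4 : T ≤ 2*(k+1) := by omega
        have h5 : (T:ℝ) ≤ ((2*(k+1):ℕ):ℝ) := by exact_mod_cast h4
        push_cast at h5
        linarith
      have hmid : 2 * η₁ * ((T-k:ℕ):ℝ) ^ (-θ) / ((k:ℝ)+1) ≤ 4*η₁/(T:ℝ) * ((T-k:ℕ):ℝ)^(-θ) := by
        rw [div_le_iff₀ (by positivity : (0:ℝ) < (k:ℝ)+1),
            show 4*η₁/(T:ℝ) * ((T-k:ℕ):ℝ)^(-θ) * ((k:ℝ)+1) = 4*η₁*((T-k:ℕ):ℝ)^(-θ)*((k:ℝ)+1)/(T:ℝ) from by ring,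
            le_div_iff₀ hT0]
        have hcc : (0:ℝ) ≤ 2 * η₁ * ((T-k:ℕ):ℝ)^(-θ) := by positivity
        linarith [mul_le_mul_of_nonneg_left hTk hcc]
      have hmid2 : 4*η₁/(T:ℝ) * ((T-k:ℕ):ℝ)^(-θ)
          ≤ (4*η₁/((T:ℝ)*(1-θ))) * ((((T-k:ℕ):ℝ))^(1-θ) - (((T-(k+1):ℕ):ℝ))^(1-θ)) := by
        have hc0 : (0:ℝ) ≤ 4*η₁/((T:ℝ)*(1-θ)) := by positivity
        calc 4*η₁/(T:ℝ) * ((T-k:ℕ):ℝ)^(-θ)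
            = (4*η₁/((T:ℝ)*(1-θ))) * ((1-θ) * ((T-k:ℕ):ℝ)^(-θ) * 1) := by
              field_simp
          _ ≤ (4*η₁/((T:ℝ)*(1-θ))) * ((((T-k:ℕ):ℝ))^(1-θ) - (((T-(k+1):ℕ):ℝ))^(1-θ)) :=
              mul_le_mul_of_nonneg_left hbl hc0
      exact le_trans hCk (le_trans hmid hmid2)
    have htele2 : ∑ k ∈ Finset.Icc (K+1) (T-1),
        ((4*η₁/((T:ℝ)*(1-θ))) * ((((T-k:ℕ):ℝ))^(1-θ) - (((T-(k+1):ℕ):ℝ))^(1-θ)))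
        = (4*η₁/((T:ℝ)*(1-θ))) * (((T-(K+1):ℕ):ℝ)^(1-θ) - ((T-(T-1+1):ℕ):ℝ)^(1-θ)) := by
      rw [← Finset.mul_sum]
      congr 1
      exact tele (fun k => ((T-k:ℕ):ℝ) ^ (1-θ)) (K+1) (T-1) (by omega)
    have hzero : ((T-(T-1+1):ℕ):ℝ)^(1-θ) = 0 := by
      have h6 : T-(T-1+1) = 0 := by omega
      rw [h6, Nat.cast_zero]
      exact Real.zero_rpow h1θ.ne'
    calc ∑ k ∈ Finset.Icc (K+1) (T-1),
        (1 / ((k : ℝ) + 1)) * (2 * η (T - k) - (1 / (k : ℝ)) * ∑ t ∈ Finset.Icc (T - k + 1) T, 2 * η t)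
        ≤ ∑ k ∈ Finset.Icc (K+1) (T-1),
          ((4*η₁/((T:ℝ)*(1-θ))) * ((((T-k:ℕ):ℝ))^(1-θ) - (((T-(k+1):ℕ):ℝ))^(1-θ))) :=
          Finset.sum_le_sum step1
      _ = (4*η₁/((T:ℝ)*(1-θ))) * (((T-(K+1):ℕ):ℝ)^(1-θ) - ((T-(T-1+1):ℕ):ℝ)^(1-θ)) := htele2
      _ = (4*η₁/((T:ℝ)*(1-θ))) * ((T-(K+1):ℕ):ℝ)^(1-θ) := by rw [hzero]; ring
  -- final assembly
  set P : ℝ := (T:ℝ)^(-θ) with hPdef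
  set Q : ℝ := ((T:ℝ)/2)^(-θ) with hQdef
  have hP0 : 0 < P := Real.rpow_pos_of_pos hT0 _
  have hQ0 : 0 < Q := Real.rpow_pos_of_pos (by linarith) _
  have hQM : (M:ℝ)^(-θ) ≤ Q := Real.rpow_le_rpow_of_nonpos (by linarith) hMreal (by linarith)
  have hTK : ((T-(K+1):ℕ):ℝ) ≤ (T:ℝ)/2 := by
    have h7 : 2*(T-(K+1)) ≤ T := by omega
    have h8 : ((2*(T-(K+1)):ℕ):ℝ) ≤ (T:ℝ) := by exact_mod_cast h7
    push_cast at h8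
    linarith
  have hφQ : ((T-(K+1):ℕ):ℝ)^(1-θ) ≤ ((T:ℝ)/2)^(1-θ) :=
    Real.rpow_le_rpow (Nat.cast_nonneg _) hTK (by linarith)
  have hhalf : ((T:ℝ)/2)^(1-θ) = (T:ℝ)/2 * Q := by
    rw [hQdef, show (1-θ:ℝ) = 1 + -θ by ring, Real.rpow_add (by linarith), Real.rpow_one]
  have hQP : Q ≤ 2 * P := by
    have hdiv : Q = P / (2:ℝ)^(-θ) := by
      rw [hQdef, hPdef, Real.div_rpow hT0.le (by norm_num)]
    have h2a : (2:ℝ)^(-1:ℝ) ≤ (2:ℝ)^(-θ) :=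
      Real.rpow_le_rpow_of_exponent_le one_le_two (by linarith)
    have h2b : (2:ℝ)^(-1:ℝ) = 1/2 := by
      rw [Real.rpow_neg_one]
      norm_num
    have h2c : (1:ℝ)/2 ≤ (2:ℝ)^(-θ) := by rw [← h2b]; exact h2a
    have h2d : (0:ℝ) < (2:ℝ)^(-θ) := by positivity
    have h9 : 2*P*(1/2) ≤ 2*P*((2:ℝ)^(-θ)) :=
      mul_le_mul_of_nonneg_left h2c (by positivity)
    rw [hdiv, div_le_iff₀ h2d]
    linarith [h9]
  have hp2' : (4*η₁/((T:ℝ)*(1-θ))) * ((T-(K+1):ℕ):ℝ)^(1-θ) ≤ 2*η₁/(1-θ) * Q := by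
    have hc0 : (0:ℝ) ≤ 4*η₁/((T:ℝ)*(1-θ)) := by positivity
    calc (4*η₁/((T:ℝ)*(1-θ))) * ((T-(K+1):ℕ):ℝ)^(1-θ)
        ≤ (4*η₁/((T:ℝ)*(1-θ))) * ((T:ℝ)/2 * Q) := by
          rw [← hhalf]
          exact mul_le_mul_of_nonneg_left hφQ hc0
      _ = 2*η₁/(1-θ) * Q := by
          field_simp
          ring
  have hp1' : η₁ * (1+θ) * (M:ℝ)^(-θ) ≤ η₁ * (1+θ) * Q :=
    mul_le_mul_of_nonneg_left hQM (by positivity)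
  calc ∑ k ∈ Finset.Icc 1 (T-1),
      (1 / ((k : ℝ) + 1)) * (2 * η (T - k) - (1 / (k : ℝ)) * ∑ t ∈ Finset.Icc (T - k + 1) T, 2 * η t)
      = (∑ k ∈ Finset.Icc 1 K,
      (1 / ((k : ℝ) + 1)) * (2 * η (T - k) - (1 / (k : ℝ)) * ∑ t ∈ Finset.Icc (T - k + 1) T, 2 * η t))
      + ∑ k ∈ Finset.Icc (K+1) (T-1),
      (1 / ((k : ℝ) + 1)) * (2 * η (T - k) - (1 / (k : ℝ)) * ∑ t ∈ Finset.Icc (T - k + 1) T, 2 * η t) := hsplit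
    _ ≤ η₁ * (1+θ) * (M:ℝ)^(-θ) + (4*η₁/((T:ℝ)*(1-θ))) * ((T-(K+1):ℕ):ℝ)^(1-θ) := add_le_add hpart1 hpart2
    _ ≤ η₁ * (1+θ) * Q + 2*η₁/(1-θ) * Q := add_le_add hp1' hp2'
    _ = (η₁*(1+θ) + 2*η₁/(1-θ)) * Q := by ring
    _ ≤ (3*η₁/(1-θ)) * Q := mul_le_mul_of_nonneg_right hcoef hQ0.le
    _ ≤ (3*η₁/(1-θ)) * (2*P) := mul_le_mul_of_nonneg_left hQP (by positivity)
    _ = (6 * η₁ / (1 - θ)) * P := by ring
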